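/- Let f : ℝ → ℝ be continuously differentiable with f'(0) > 0, and let c be a real constant with c < f(0). Then there exist T > 0 and a differentiable solution (x, y) : [0, T] → ℝ² of the system x'(t) = y(t) − f(x(t)), y'(t) = c − y(t) such that x(T) = 0, y(T) = f(0), and x(t) < 0, y(t) > f(0) for all t ∈ [0, T). That is, there is a trajectory of the left-hand vector field that reaches the double tangency point (0, f(0)) in finite forward time from the region { x < 0, y > f(0) }. -/

import Mathlib

open Set Filter Topology

/-- Let `f` be C¹ with `f' 0 > 0` and let `c < f 0`.  Then there are `T > 0` and a
differentiable solution `(x, y) : [0, T] → ℝ²` of `x' = y − f(x)`, `y' = c − y`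
with `x T = 0`, `y T = f 0`, and `x t < 0`, `y t > f 0` for all `t ∈ [0, T)`:
a trajectory of the left-hand vector field reaches the double tangency `(0, f 0)`
in finite forward time from the region `{x < 0, y > f 0}`. -/
theorem trajectory_reaching_double_tangency
    (f : ℝ → ℝ) (hf : ContDiff ℝ 1 f) (hf' : 0 < deriv f 0)
    (c : ℝ) (hc : c < f 0) :
    ∃ T > 0, ∃ x y : ℝ → ℝ,
      (∀ t ∈ Set.Icc 0 T, HasDerivWithinAt x (y t - f (x t)) (Set.Icc 0 T) t) ∧
      (∀ t ∈ Set.Icc 0 T, HasDerivWithinAt y (c - y t) (Set.Icc 0 T) t) ∧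
      x T = 0 ∧ y T = f 0 ∧
      (∀ t ∈ Set.Ico 0 T, x t < 0 ∧ f 0 < y t) := by
  -- the autonomous vector field on ℝ²
  set v : ℝ × ℝ → ℝ × ℝ := fun p => (p.2 - f p.1, c - p.2) with hv
  have hvC : ContDiff ℝ 1 v := by
    apply ContDiff.prodMk
    · exact (contDiff_snd).sub (hf.comp contDiff_fst)
    · exact contDiff_const.sub contDiff_snd
  obtain ⟨F, hF0, ε, hε, hF⟩ :=
    (hvC.contDiffAt (x := ((0 : ℝ), f 0))).exists_forall_mem_closedBall_exists_eq_forall_mem_Ioo_hasDerivAt₀ (0 : ℝ)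
  rw [zero_sub, zero_add] at hF
  set X : ℝ → ℝ := fun t => (F t).1 with hXdef
  set Y : ℝ → ℝ := fun t => (F t).2 with hYdef
  have hX0 : X 0 = 0 := by simp [hXdef, hF0]
  have hY0 : Y 0 = f 0 := by simp [hYdef, hF0]
  have hXd : ∀ t ∈ Ioo (-ε) ε, HasDerivAt X (Y t - f (X t)) t := by
    intro t ht
    exact ((ContinuousLinearMap.fst ℝ ℝ ℝ).hasFDerivAt).comp_hasDerivAt t (hF t ht)
  have hYd : ∀ t ∈ Ioo (-ε) ε, HasDerivAt Y (c - Y t) t := by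
    intro t ht
    exact ((ContinuousLinearMap.snd ℝ ℝ ℝ).hasFDerivAt).comp_hasDerivAt t (hF t ht)
  have h0mem : (0 : ℝ) ∈ Ioo (-ε) ε := by constructor <;> linarith
  -- g = X' on the interval
  set g : ℝ → ℝ := fun t => Y t - f (X t) with hgdef
  have hg0 : g 0 = 0 := by simp [hgdef, hX0, hY0]
  have hgderiv : HasDerivAt g (c - f 0) 0 := by
    have h1 : HasDerivAt Y (c - Y 0) 0 := hYd 0 h0mem
    have h2 : HasDerivAt X (Y 0 - f (X 0)) 0 := hXd 0 h0mem
    have hX'0 : Y 0 - f (X 0) = 0 := by rw [hX0, hY0]; ring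
    have hfd : HasDerivAt f (deriv f (X 0)) (X 0) :=
      ((hf.differentiable one_ne_zero) (X 0)).hasDerivAt
    have h3 : HasDerivAt (fun t => f (X t)) (deriv f (X 0) * (Y 0 - f (X 0))) 0 :=
      hfd.comp 0 h2
    have := h1.sub h3
    rw [hX'0, hY0] at this
    rw [mul_zero, sub_zero] at this; exact this
  have hcf : c - f 0 < 0 := by linarith
  -- eventually g t > 0 for t < 0
  have hslope : Tendsto (slope g 0) (𝓝[≠] (0:ℝ)) (𝓝 (c - f 0)) :=
    hasDerivAt_iff_tendsto_slope.mp hgderiv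
  have hslope_neg : ∀ᶠ t in 𝓝[≠] (0:ℝ), slope g 0 t < 0 :=
    hslope.eventually (eventually_of_mem (Iio_mem_nhds hcf) fun y hy => hy)
  have hgpos : ∀ᶠ t in 𝓝[<] (0:ℝ), 0 < g t := by
    have h := hslope_neg.filter_mono
      (nhdsWithin_mono _ (fun t (ht : t ∈ Iio (0:ℝ)) => ne_of_lt ht))
    filter_upwards [h, self_mem_nhdsWithin] with t ht ht0
    have ht0' : t < 0 := ht0
    have hsl : g t / t < 0 := by
      have : slope g 0 t = g t / t := by
        rw [slope_def_field]; rw [hg0]; rw [sub_zero, sub_zero]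
      rwa [this] at ht
    rcases div_neg_iff.mp hsl with ⟨h1, h2⟩ | ⟨h1, h2⟩
    · exact h1
    · linarith
  -- obtain δ₁ for g positivity
  obtain ⟨l, hl, hIoo⟩ := mem_nhdsLT_iff_exists_Ioo_subset.mp hgpos
  -- continuity of Y at 0 gives c - Y t < 0 near 0
  have hYcont : ContinuousAt Y 0 := (hYd 0 h0mem).continuousAt
  have hYnear : ∀ᶠ t in 𝓝 (0:ℝ), c - Y t < 0 := by
    have : Tendsto (fun t => c - Y t) (𝓝 0) (𝓝 (c - Y 0)) :=
      tendsto_const_nhds.sub hYcont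
    rw [hY0] at this
    exact this.eventually (eventually_of_mem (Iio_mem_nhds hcf) fun y hy => hy)
  obtain ⟨δ₂, hδ₂, hball⟩ := Metric.eventually_nhds_iff_ball.mp hYnear
  -- choose T
  set T : ℝ := min (min (ε / 2) (δ₂ / 2)) (-l / 2) with hT
  have hT0 : 0 < T := by
    apply lt_min (lt_min (by linarith) (by linarith))
    simp only [Iio, mem_setOf_eq] at hl
    linarith
  have hTε : T < ε := lt_of_le_of_lt (le_trans (min_le_left _ _) (min_le_left _ _)) (by linarith)
  have hTδ₂ : T < δ₂ := lt_of_le_of_lt (le_trans (min_le_left _ _) (min_le_right _ _)) (by linarith)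
  have hTl : l < -T := by
    have : T ≤ -l / 2 := min_le_right _ _
    simp only [mem_Iio] at hl
    linarith
  have hsub : Icc (-T) 0 ⊆ Ioo (-ε) ε := fun t ht =>
    ⟨by cases ht with | intro h1 h2 => linarith, by cases ht with | intro h1 h2 => linarith⟩
  -- Y is strictly antitone on [-T, 0]
  have hYcontOn : ContinuousOn Y (Icc (-T) 0) := fun t ht =>
    ((hYd t (hsub ht)).continuousAt).continuousWithinAt
  have hYanti : StrictAntiOn Y (Icc (-T) 0) := by
    apply strictAntiOn_of_deriv_neg (convex_Icc _ _) hYcontOn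
    intro t ht
    rw [interior_Icc] at ht
    have htm : t ∈ Ioo (-ε) ε := hsub ⟨le_of_lt ht.1, le_of_lt ht.2⟩
    rw [(hYd t htm).deriv]
    apply hball
    simp only [Metric.mem_ball, Real.dist_eq, sub_zero]
    rw [abs_lt]
    exact ⟨by cases ht with | intro h1 h2 => linarith, by cases ht with | intro h1 h2 => linarith⟩
  -- X is strictly monotone on [-T, 0]
  have hXcontOn : ContinuousOn X (Icc (-T) 0) := fun t ht =>
    ((hXd t (hsub ht)).continuousAt).continuousWithinAt
  have hXmono : StrictMonoOn X (Icc (-T) 0) := by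
    apply strictMonoOn_of_deriv_pos (convex_Icc _ _) hXcontOn
    intro t ht
    rw [interior_Icc] at ht
    have htm : t ∈ Ioo (-ε) ε := hsub ⟨le_of_lt ht.1, le_of_lt ht.2⟩
    rw [(hXd t htm).deriv]
    exact hIoo ⟨by cases ht with | intro h1 h2 => linarith, ht.2⟩
  -- now build the shifted solution
  refine ⟨T, hT0, fun t => X (t - T), fun t => Y (t - T), ?_, ?_, ?_, ?_, ?_⟩
  · intro t ht
    have htm : t - T ∈ Ioo (-ε) ε := by
      constructor
      · cases ht with | intro h1 h2 => linarith
      · cases ht with | intro h1 h2 => linarith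
    have h1 : HasDerivAt (fun s => X (s - T)) ((Y (t - T) - f (X (t - T))) * 1) t :=
      by have := (hXd (t - T) htm).comp t ((hasDerivAt_id' t).sub_const T); exact this
    simpa using h1.hasDerivWithinAt
  · intro t ht
    have htm : t - T ∈ Ioo (-ε) ε := by
      constructor
      · cases ht with | intro h1 h2 => linarith
      · cases ht with | intro h1 h2 => linarith
    have h1 : HasDerivAt (fun s => Y (s - T)) ((c - Y (t - T)) * 1) t :=
      by have := (hYd (t - T) htm).comp t ((hasDerivAt_id' t).sub_const T); exact this
    simpa using h1.hasDerivWithinAt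
  · simpa using hX0
  · simpa using hY0
  · intro t ht
    have hmem1 : t - T ∈ Icc (-T) 0 := by
      constructor
      · cases ht with | intro h1 h2 => linarith
      · cases ht with | intro h1 h2 => linarith
    have hmem0 : (0 : ℝ) ∈ Icc (-T) 0 := ⟨by linarith, le_rfl⟩
    have hlt : t - T < 0 := by cases ht with | intro h1 h2 => linarith
    constructor
    · have := hXmono hmem1 hmem0 hlt
      rwa [hX0] at this
    · have := hYanti hmem1 hmem0 hlt
      rwa [hY0] at this
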